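/- Let K be a field, r ≥ 2, and let f = a_0 + a_1 X_r + ... + a_m X_r^m and g = b_0 + b_1 X_r + ... + b_n X_r^n be polynomials in K[X_1,...,X_r] with a_0, ..., a_m, b_0, ..., b_n ∈ K[X_1,...,X_{r-1}] and a_0·a_m·b_n ≠ 0. If d_1 divides a_m and d_2 divides b_n in K[X_1,...,X_{r-1}], and for some index j ∈ {1,...,r-1} one has deg_{X_j} a_m > mn·deg_{X_j} d_1 + m²n·deg_{X_j} d_2 + H_j(f), then the polynomial f(X_1,...,X_{r-1}, g(X_1,...,X_r)) has at most Ω(a_m/d_1) + m·Ω(b_n/d_2) irreducible factors over the field K(X_1,...,X_{r-1}), counted with multiplicity. -/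

import Mathlib

open Polynomial

/-- Ω(p): number of irreducible factors of `p`, counted with multiplicity. -/
noncomputable def Omega {R : Type*} [CommMonoidWithZero R] [IsCancelMulZero R]
    [UniqueFactorizationMonoid R] (p : R) : ℕ :=
  Multiset.card (UniqueFactorizationMonoid.factors p)

/-- H_j(f) for f = a₀ + a₁Xᵣ + ⋯ + a_d Xᵣ^d with coefficients in K[X₁,…,X_{r-1}]:
the max over i < d of deg_{X_j} aᵢ. -/
noncomputable def Hj {K : Type*} [Field K] {s : ℕ}
    (a : ℕ → MvPolynomial (Fin s) K) (d : ℕ) (j : Fin s) : ℕ :=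
  (Finset.range d).sup fun i => MvPolynomial.degreeOf j (a i)

namespace Stmt6Aux

variable {K : Type*} [Field K]

/-- degreeOf is additive on products, over a field (domain). -/
theorem mvdeg_mul {s : ℕ} (j : Fin s) {p q : MvPolynomial (Fin s) K}
    (hp : p ≠ 0) (hq : q ≠ 0) :
    MvPolynomial.degreeOf j (p * q) =
      MvPolynomial.degreeOf j p + MvPolynomial.degreeOf j q := by
  obtain ⟨k, rfl⟩ : ∃ k, s = k + 1 := ⟨s - 1, by have := j.pos; omega⟩
  -- swap j and 0
  let e : Fin (k+1) ≃ Fin (k+1) := Equiv.swap j 0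
  have hre : ∀ x : MvPolynomial (Fin (k+1)) K,
      MvPolynomial.degreeOf 0 ((MvPolynomial.rename (e : Fin (k+1) → Fin (k+1))) x)
        = MvPolynomial.degreeOf j x := by
    intro x
    have := MvPolynomial.degreeOf_rename_of_injective
      (p := x) (f := (e : Fin (k+1) → Fin (k+1))) e.injective j
    simpa [e, Equiv.swap_apply_left] using this
  have hrmul : (MvPolynomial.rename (e : Fin (k+1) → Fin (k+1))) (p * q)
      = (MvPolynomial.rename (e : Fin (k+1) → Fin (k+1))) p *
        (MvPolynomial.rename (e : Fin (k+1) → Fin (k+1))) q := map_mul _ _ _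
  have hinj : Function.Injective
      (MvPolynomial.rename (e : Fin (k+1) → Fin (k+1)) :
        MvPolynomial (Fin (k+1)) K → MvPolynomial (Fin (k+1)) K) :=
    MvPolynomial.rename_injective _ e.injective
  have hp' : (MvPolynomial.rename (e : Fin (k+1) → Fin (k+1))) p ≠ 0 := by
    intro h; exact hp (hinj (by simpa using h))
  have hq' : (MvPolynomial.rename (e : Fin (k+1) → Fin (k+1))) q ≠ 0 := by
    intro h; exact hq (hinj (by simpa using h))
  rw [← hre, ← hre, ← hre, hrmul]
  -- now reduce to degreeOf 0 via finSuccEquiv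
  set P := (MvPolynomial.rename (e : Fin (k+1) → Fin (k+1))) p with hP
  set Q := (MvPolynomial.rename (e : Fin (k+1) → Fin (k+1))) q with hQ
  have h1 := MvPolynomial.natDegree_finSuccEquiv (R := K) (f := P)
  have h2 := MvPolynomial.natDegree_finSuccEquiv (R := K) (f := Q)
  have h3 := MvPolynomial.natDegree_finSuccEquiv (R := K) (f := P * Q)
  rw [← h1, ← h2, ← h3, map_mul]
  have hP0 : (MvPolynomial.finSuccEquiv K k) P ≠ 0 := by
    intro h
    apply hp'
    apply (MvPolynomial.finSuccEquiv K k).injective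
    simpa using h
  have hQ0 : (MvPolynomial.finSuccEquiv K k) Q ≠ 0 := by
    intro h
    apply hq'
    apply (MvPolynomial.finSuccEquiv K k).injective
    simpa using h
  exact Polynomial.natDegree_mul hP0 hQ0

theorem mvdeg_unit {s : ℕ} (j : Fin s) {u : MvPolynomial (Fin s) K} (hu : IsUnit u) :
    MvPolynomial.degreeOf j u = 0 := by
  obtain ⟨v, hv⟩ := hu.exists_right_inv
  have hu0 : u ≠ 0 := by rintro rfl; simp at hv
  have hv0 : v ≠ 0 := by rintro rfl; simp at hv
  have := mvdeg_mul j hu0 hv0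
  rw [hv] at this
  rw [show MvPolynomial.degreeOf j (1 : MvPolynomial (Fin s) K) = 0 by simp [MvPolynomial.degreeOf]] at this
  omega



variable {K : Type*} [Field K] {s : ℕ}

noncomputable abbrev FR (K : Type*) [Field K] (s : ℕ) :=
  FractionRing (MvPolynomial (Fin s) K)

noncomputable abbrev iot (K : Type*) [Field K] (s : ℕ) :
    MvPolynomial (Fin s) K →+* FR K s :=
  algebraMap (MvPolynomial (Fin s) K) (FR K s)

theorem iot_injective : Function.Injective (iot K s) :=
  IsFractionRing.injective _ _

theorem exists_rep (x : FR K s) :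
    ∃ p q : MvPolynomial (Fin s) K, q ≠ 0 ∧ x * iot K s q = iot K s p := by
  obtain ⟨p, q, hq, h⟩ := IsFractionRing.div_surjective (A := MvPolynomial (Fin s) K) x
  have hq0 : q ≠ 0 := nonZeroDivisors.ne_zero hq
  refine ⟨p, q, hq0, ?_⟩
  have hq' : iot K s q ≠ 0 := fun h0 => hq0 (iot_injective (by simpa using h0))
  rw [← h, div_mul_cancel₀ _ hq']

/-- deg in variable j, as a rational. -/
noncomputable def dg (j : Fin s) (p : MvPolynomial (Fin s) K) : ℚ :=
  (MvPolynomial.degreeOf j p : ℚ)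

theorem dg_mul (j : Fin s) {p q : MvPolynomial (Fin s) K} (hp : p ≠ 0) (hq : q ≠ 0) :
    dg j (p * q) = dg j p + dg j q := by
  unfold dg; rw [mvdeg_mul j hp hq]; push_cast; ring

/-- the valuation on the fraction field (junk value 0 at 0). -/
noncomputable def v0 (j : Fin s) (x : FR K s) : ℚ := by
  classical
  exact if hx : x = 0 then 0 else
    dg j (exists_rep x).choose - dg j (exists_rep x).choose_spec.choose

theorem v0_spec (j : Fin s) {x : FR K s} (hx : x ≠ 0) {p q : MvPolynomial (Fin s) K}
    (hq : q ≠ 0) (h : x * iot K s q = iot K s p) :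
    v0 j x = dg j p - dg j q := by
  classical
  obtain ⟨p', q', hq', h', hv⟩ :
      ∃ p' q' : MvPolynomial (Fin s) K, q' ≠ 0 ∧ x * iot K s q' = iot K s p' ∧
        v0 j x = dg j p' - dg j q' := by
    refine ⟨(exists_rep x).choose, (exists_rep x).choose_spec.choose,
      (exists_rep x).choose_spec.choose_spec.1,
      (exists_rep x).choose_spec.choose_spec.2, ?_⟩
    rw [v0, dif_neg hx]
  have hp : p ≠ 0 := by
    rintro rfl
    simp only [map_zero] at h
    rcases mul_eq_zero.1 h with h0 | h0
    · exact hx h0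
    · exact hq (iot_injective (by simpa using h0))
  have hp' : p' ≠ 0 := by
    rintro rfl
    simp only [map_zero] at h'
    rcases mul_eq_zero.1 h' with h1 | h1
    · exact hx h1
    · exact hq' (iot_injective (by simpa using h1))
  have key : p * q' = p' * q := by
    apply iot_injective
    rw [map_mul, map_mul, ← h, ← h']
    ring
  have hdg : dg j p + dg j q' = dg j p' + dg j q := by
    rw [← dg_mul j hp hq', ← dg_mul j hp' hq, key]
  rw [hv]
  linarith

theorem v0_mul (j : Fin s) {x y : FR K s} (hx : x ≠ 0) (hy : y ≠ 0) :
    v0 j (x * y) = v0 j x + v0 j y := by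
  obtain ⟨p, q, hq, h⟩ := exists_rep (K := K) (s := s) x
  obtain ⟨p', q', hq', h'⟩ := exists_rep (K := K) (s := s) y
  have hxy : x * y ≠ 0 := mul_ne_zero hx hy
  have hp : p ≠ 0 := by
    rintro rfl; simp only [map_zero] at h
    rcases mul_eq_zero.1 h with h0 | h0
    · exact hx h0
    · exact hq (iot_injective (by simpa using h0))
  have hp' : p' ≠ 0 := by
    rintro rfl; simp only [map_zero] at h'
    rcases mul_eq_zero.1 h' with h0 | h0
    · exact hy h0
    · exact hq' (iot_injective (by simpa using h0))
  have hqq : q * q' ≠ 0 := mul_ne_zero hq hq'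
  have hcomb : (x * y) * iot K s (q * q') = iot K s (p * p') := by
    rw [map_mul, map_mul]
    calc x * y * (iot K s q * iot K s q') = (x * iot K s q) * (y * iot K s q') := by ring
    _ = iot K s p * iot K s p' := by rw [h, h']
  rw [v0_spec j hxy hqq hcomb, v0_spec j hx hq h, v0_spec j hy hq' h',
    dg_mul j hp hp', dg_mul j hq hq']
  ring

theorem v0_iot (j : Fin s) {p : MvPolynomial (Fin s) K} (hp : p ≠ 0) :
    v0 j (iot K s p) = dg j p := by
  have h1 : (1 : MvPolynomial (Fin s) K) ≠ 0 := one_ne_zero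
  have : iot K s p * iot K s 1 = iot K s p := by simp
  rw [v0_spec j (fun h0 => hp (iot_injective (by simpa using h0))) h1 this]
  simp [dg, MvPolynomial.degreeOf]

theorem v0_one (j : Fin s) : v0 j (1 : FR K s) = 0 := by
  have := v0_iot (K := K) (s := s) j (p := 1) one_ne_zero
  simpa [dg, MvPolynomial.degreeOf] using this

theorem v0_pow (j : Fin s) {x : FR K s} (hx : x ≠ 0) (k : ℕ) :
    v0 j (x ^ k) = k * v0 j x := by
  induction k with
  | zero => simpa using v0_one (K := K) (s := s) j
  | succ k ih =>
    rw [pow_succ, v0_mul j (pow_ne_zero _ hx) hx, ih]; push_cast; ring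

theorem v0_add (j : Fin s) {x y : FR K s} (hx : x ≠ 0) (hy : y ≠ 0) (hxy : x + y ≠ 0) :
    v0 j (x + y) ≤ max (v0 j x) (v0 j y) := by
  obtain ⟨p, q, hq, h⟩ := exists_rep (K := K) (s := s) x
  obtain ⟨p', q', hq', h'⟩ := exists_rep (K := K) (s := s) y
  have hp : p ≠ 0 := by
    rintro rfl; simp only [map_zero] at h
    rcases mul_eq_zero.1 h with h0 | h0
    · exact hx h0
    · exact hq (iot_injective (by simpa using h0))
  have hp' : p' ≠ 0 := by
    rintro rfl; simp only [map_zero] at h'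
    rcases mul_eq_zero.1 h' with h0 | h0
    · exact hy h0
    · exact hq' (iot_injective (by simpa using h0))
  have hqq : q * q' ≠ 0 := mul_ne_zero hq hq'
  have hsum : (x + y) * iot K s (q * q') = iot K s (p * q' + p' * q) := by
    rw [map_mul, map_add, map_mul, map_mul]
    calc (x + y) * (iot K s q * iot K s q')
        = (x * iot K s q) * iot K s q' + (y * iot K s q') * iot K s q := by ring
    _ = _ := by rw [h, h']
  rw [v0_spec j hxy hqq hsum, v0_spec j hx hq h, v0_spec j hy hq' h',
    dg_mul j hq hq']
  have hnat := MvPolynomial.degreeOf_add_le j (p * q') (p' * q)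
  have hle : dg j (p * q' + p' * q) ≤ max (dg j (p * q')) (dg j (p' * q)) := by
    unfold dg; exact_mod_cast hnat
  rw [dg_mul j hp hq', dg_mul j hp' hq] at hle
  rcases le_max_iff.1 hle with h1 | h1
  · exact le_max_of_le_left (by linarith)
  · exact le_max_of_le_right (by linarith)

theorem v0_neg (j : Fin s) {x : FR K s} (hx : x ≠ 0) : v0 j (-x) = v0 j x := by
  have hC : iot K s (MvPolynomial.C (-1)) = -1 := by
    have h1 : (MvPolynomial.C (-1) : MvPolynomial (Fin s) K) = -1 := by simp
    rw [h1, map_neg, map_one]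
  have hm : -x = iot K s (MvPolynomial.C (-1)) * x := by rw [hC]; ring
  have hCne : (MvPolynomial.C (-1) : MvPolynomial (Fin s) K) ≠ 0 := by simp
  rw [hm, v0_mul j (by rw [hC]; simp) hx, v0_iot j hCne]
  simp [dg, MvPolynomial.degreeOf]



theorem v0_add_eq_left (j : Fin s) {x y : FR K s} (hx : x ≠ 0)
    (hy : y = 0 ∨ (y ≠ 0 ∧ v0 j y < v0 j x)) :
    x + y ≠ 0 ∧ v0 j (x + y) = v0 j x := by
  rcases hy with rfl | ⟨hy, hlt⟩
  · simpa using hx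
  have hne : x + y ≠ 0 := by
    intro h0
    have hxeq : x = -y := add_eq_zero_iff_eq_neg.1 h0
    rw [hxeq, v0_neg j hy] at hlt
    exact lt_irrefl _ hlt
  refine ⟨hne, le_antisymm ?_ ?_⟩
  · have := v0_add j hx hy hne
    rcases max_cases (v0 j x) (v0 j y) with ⟨h1, _⟩ | ⟨h1, h2⟩ <;> rw [h1] at this
    · exact this
    · linarith
  · have hx' : x = (x + y) + (-y) := by ring
    have hny : (-y) ≠ 0 := neg_ne_zero.2 hy
    have := v0_add j hne hny (by rw [← hx']; exact hx)
    rw [← hx', v0_neg j hy] at this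
    rcases max_cases (v0 j (x+y)) (v0 j y) with ⟨h1, _⟩ | ⟨h1, h2⟩ <;> rw [h1] at this
    · exact this
    · linarith

theorem v0_sum_le (j : Fin s) {ι : Type*} (t : Finset ι) (F : ι → FR K s) (c : ℚ)
    (h : ∀ i ∈ t, F i = 0 ∨ (F i ≠ 0 ∧ v0 j (F i) ≤ c)) :
    t.sum F = 0 ∨ (t.sum F ≠ 0 ∧ v0 j (t.sum F) ≤ c) := by
  classical
  induction t using Finset.induction_on with
  | empty => simp
  | insert a t' hnotmem ih =>
    rw [Finset.sum_insert hnotmem]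
    have ha := h a (Finset.mem_insert_self a t')
    have hrest := ih (fun i hi => h i (Finset.mem_insert_of_mem hi))
    rcases ha with ha0 | ⟨ha1, ha2⟩
    · rw [ha0, zero_add]; exact hrest
    rcases hrest with h0 | ⟨h1, h2⟩
    · rw [h0, add_zero]; right; exact ⟨ha1, ha2⟩
    by_cases hz : F a + t'.sum F = 0
    · left; exact hz
    right
    refine ⟨hz, ?_⟩
    have := v0_add j ha1 h1 hz
    rcases le_max_iff.1 this with h3 | h3 <;> linarith

theorem v0_sum_lt (j : Fin s) {ι : Type*} (t : Finset ι) (F : ι → FR K s) (c : ℚ)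
    (h : ∀ i ∈ t, F i = 0 ∨ (F i ≠ 0 ∧ v0 j (F i) < c)) :
    t.sum F = 0 ∨ (t.sum F ≠ 0 ∧ v0 j (t.sum F) < c) := by
  classical
  induction t using Finset.induction_on with
  | empty => simp
  | insert a t' hnotmem ih =>
    rw [Finset.sum_insert hnotmem]
    have ha := h a (Finset.mem_insert_self a t')
    have hrest := ih (fun i hi => h i (Finset.mem_insert_of_mem hi))
    rcases ha with ha0 | ⟨ha1, ha2⟩
    · rw [ha0, zero_add]; exact hrest
    rcases hrest with h0 | ⟨h1, h2⟩
    · rw [h0, add_zero]; right; exact ⟨ha1, ha2⟩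
    by_cases hz : F a + t'.sum F = 0
    · left; exact hz
    right
    refine ⟨hz, ?_⟩
    have := v0_add j ha1 h1 hz
    rcases le_max_iff.1 this with h3 | h3 <;> linarith

theorem v0_sum_dominant (j : Fin s) {ι : Type*} (t : Finset ι) (F : ι → FR K s)
    (i₀ : ι) (hi₀ : i₀ ∈ t) (h0 : F i₀ ≠ 0)
    (h : ∀ i ∈ t, i ≠ i₀ → F i = 0 ∨ (F i ≠ 0 ∧ v0 j (F i) < v0 j (F i₀))) :
    t.sum F ≠ 0 ∧ v0 j (t.sum F) = v0 j (F i₀) := by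
  classical
  rw [← Finset.add_sum_erase t F hi₀]
  have hrest := v0_sum_lt j (t.erase i₀) F (v0 j (F i₀))
    (fun i hi => h i (Finset.mem_of_mem_erase hi) (Finset.ne_of_mem_erase hi))
  rcases hrest with h1 | ⟨h1, h2⟩
  · exact v0_add_eq_left j h0 (Or.inl h1)
  · exact v0_add_eq_left j h0 (Or.inr ⟨h1, h2⟩)

/-- Gauss valuation at slope `lam` on polynomials over the fraction field. -/
noncomputable def W (j : Fin s) (lam : ℚ) (F : Polynomial (FR K s)) : WithBot ℚ :=
  F.support.sup fun i => ((v0 j (F.coeff i) + lam * i : ℚ) : WithBot ℚ)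

theorem le_W (j : Fin s) (lam : ℚ) {F : Polynomial (FR K s)} {i : ℕ}
    (hi : i ∈ F.support) :
    ((v0 j (F.coeff i) + lam * i : ℚ) : WithBot ℚ) ≤ W j lam F :=
  Finset.le_sup (f := fun i => ((v0 j (F.coeff i) + lam * i : ℚ) : WithBot ℚ)) hi

theorem W_le (j : Fin s) (lam : ℚ) {F : Polynomial (FR K s)} {c : ℚ}
    (h : ∀ i ∈ F.support, v0 j (F.coeff i) + lam * i ≤ c) :
    W j lam F ≤ (c : WithBot ℚ) :=
  Finset.sup_le fun i hi => by exact_mod_cast h i hi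

theorem W_attained (j : Fin s) (lam : ℚ) {F : Polynomial (FR K s)} (hF : F ≠ 0) :
    ∃ i₀ ∈ F.support, W j lam F = ((v0 j (F.coeff i₀) + lam * i₀ : ℚ) : WithBot ℚ) ∧
      (∀ i ∈ F.support, v0 j (F.coeff i) + lam * i ≤ v0 j (F.coeff i₀) + lam * i₀) ∧
      (∀ i ∈ F.support, i₀ < i →
        v0 j (F.coeff i) + lam * i < v0 j (F.coeff i₀) + lam * i₀) := by
  classical
  have hne : F.support.Nonempty := Polynomial.nonempty_support_iff.2 hF
  set val : ℕ → ℚ := fun i => v0 j (F.coeff i) + lam * i with hval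
  obtain ⟨i₁, hi₁, hsup⟩ := Finset.exists_mem_eq_sup F.support hne
    (fun i => ((val i : ℚ) : WithBot ℚ))
  set T := F.support.filter (fun i => val i = val i₁) with hT
  have hi₁T : i₁ ∈ T := Finset.mem_filter.2 ⟨hi₁, rfl⟩
  have hTne : T.Nonempty := ⟨i₁, hi₁T⟩
  set i₀ := T.max' hTne with hi₀def
  have hi₀T : i₀ ∈ T := T.max'_mem hTne
  obtain ⟨hi₀supp, hi₀val⟩ := Finset.mem_filter.1 hi₀T
  have hWeq : W j lam F = ((val i₀ : ℚ) : WithBot ℚ) := by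
    rw [W, hsup, hi₀val]
  have hle : ∀ i ∈ F.support, val i ≤ val i₀ := by
    intro i hi
    have h1 : ((val i : ℚ) : WithBot ℚ) ≤ W j lam F :=
      Finset.le_sup (f := fun i => ((val i : ℚ) : WithBot ℚ)) hi
    rw [hWeq] at h1
    exact_mod_cast h1
  refine ⟨i₀, hi₀supp, hWeq, hle, ?_⟩
  intro i hi hlt
  rcases lt_or_eq_of_le (hle i hi) with h1 | h1
  · exact h1
  · exfalso
    have hiT : i ∈ T := Finset.mem_filter.2 ⟨hi, by rw [h1, hi₀val]⟩
    have := Finset.le_max' T i hiT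
    omega

theorem W_mul (j : Fin s) (lam : ℚ) {F G : Polynomial (FR K s)}
    (hF : F ≠ 0) (hG : G ≠ 0) :
    W j lam (F * G) = W j lam F + W j lam G := by
  classical
  obtain ⟨i₀, hi₀, hWF, hFle, hFlt⟩ := W_attained j lam hF
  obtain ⟨j₀, hj₀, hWG, hGle, hGlt⟩ := W_attained j lam hG
  set SF := v0 j (F.coeff i₀) + lam * i₀ with hSF
  set SG := v0 j (G.coeff j₀) + lam * j₀ with hSG
  -- the distinguished coefficient
  have hcoeff : ∀ k : ℕ, (F * G).coeff k = ∑ x ∈ Finset.HasAntidiagonal.antidiagonal k,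
      F.coeff x.1 * G.coeff x.2 := fun k => Polynomial.coeff_mul F G k
  have hkey : (F * G).coeff (i₀ + j₀) ≠ 0 ∧
      v0 j ((F * G).coeff (i₀ + j₀)) = v0 j (F.coeff i₀ * G.coeff j₀) := by
    rw [hcoeff]
    apply v0_sum_dominant j _ _ (i₀, j₀)
      (Finset.HasAntidiagonal.mem_antidiagonal.2 rfl)
      (mul_ne_zero (Polynomial.mem_support_iff.1 hi₀) (Polynomial.mem_support_iff.1 hj₀))
    rintro ⟨x1, x2⟩ hx hne
    have hx12 : x1 + x2 = i₀ + j₀ := Finset.HasAntidiagonal.mem_antidiagonal.1 hx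
    by_cases hF1 : F.coeff x1 = 0
    · left; rw [hF1, zero_mul]
    by_cases hG1 : G.coeff x2 = 0
    · left; rw [hG1, mul_zero]
    right
    have hx1s : x1 ∈ F.support := Polynomial.mem_support_iff.2 hF1
    have hx2s : x2 ∈ G.support := Polynomial.mem_support_iff.2 hG1
    refine ⟨mul_ne_zero hF1 hG1, ?_⟩
    rw [v0_mul j hF1 hG1,
      v0_mul j (Polynomial.mem_support_iff.1 hi₀) (Polynomial.mem_support_iff.1 hj₀)]
    have hne' : x1 ≠ i₀ ∨ x2 ≠ j₀ := by
      by_contra hcon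
      push_neg at hcon
      exact hne (Prod.ext hcon.1 hcon.2)
    have hcases : i₀ < x1 ∨ j₀ < x2 := by
      rcases hne' with h1 | h1 <;> omega
    have hlam : lam * (x1 : ℚ) + lam * (x2 : ℚ) = lam * (i₀ : ℚ) + lam * (j₀ : ℚ) := by
      rw [← mul_add, ← mul_add]
      congr 1
      exact_mod_cast congrArg (Nat.cast (R := ℚ)) hx12
    rcases hcases with h1 | h1
    · have hs := hFlt x1 hx1s h1
      have hs2 := hGle x2 hx2s
      linarith [hs, hs2, hlam]
    · have hs := hGlt x2 hx2s h1
      have hs2 := hFle x1 hx1s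
      linarith [hs, hs2, hlam]
  have hupper : W j lam (F * G) ≤ ((SF + SG : ℚ) : WithBot ℚ) := by
    apply W_le
    intro k hk
    have hkne : (F * G).coeff k ≠ 0 := Polynomial.mem_support_iff.1 hk
    have := v0_sum_le j (Finset.HasAntidiagonal.antidiagonal k)
      (fun x => F.coeff x.1 * G.coeff x.2) (SF + SG - lam * k) ?_
    · rcases this with h0 | ⟨h1, h2⟩
      · exfalso; exact hkne (by rw [hcoeff]; exact h0)
      · rw [hcoeff]; linarith
    · rintro ⟨x1, x2⟩ hx
      have hx12 : x1 + x2 = k := Finset.HasAntidiagonal.mem_antidiagonal.1 hx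
      by_cases hF1 : F.coeff x1 = 0
      · left; show F.coeff x1 * G.coeff x2 = 0; rw [hF1, zero_mul]
      by_cases hG1 : G.coeff x2 = 0
      · left; show F.coeff x1 * G.coeff x2 = 0; rw [hG1, mul_zero]
      right
      have hmn : F.coeff x1 * G.coeff x2 ≠ 0 := mul_ne_zero hF1 hG1
      refine ⟨hmn, ?_⟩
      show v0 j (F.coeff x1 * G.coeff x2) ≤ SF + SG - lam * k
      rw [v0_mul j hF1 hG1]
      have hs := hFle x1 (Polynomial.mem_support_iff.2 hF1)
      have hs2 := hGle x2 (Polynomial.mem_support_iff.2 hG1)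
      have hlam : lam * (x1 : ℚ) + lam * (x2 : ℚ) = lam * (k : ℚ) := by
        rw [← mul_add]
        congr 1
        exact_mod_cast congrArg (Nat.cast (R := ℚ)) hx12
      linarith [hs, hs2, hlam]
  have hlower : ((SF + SG : ℚ) : WithBot ℚ) ≤ W j lam (F * G) := by
    have hk : (i₀ + j₀) ∈ (F * G).support := Polynomial.mem_support_iff.2 hkey.1
    have h1 := le_W j lam hk
    have h2 : v0 j ((F * G).coeff (i₀ + j₀)) + lam * (((i₀ + j₀ : ℕ)) : ℚ) = SF + SG := by
      rw [hkey.2, v0_mul j (Polynomial.mem_support_iff.1 hi₀)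
        (Polynomial.mem_support_iff.1 hj₀)]
      push_cast
      ring
    rw [h2] at h1
    exact h1
  rw [hWF, hWG, ← WithBot.coe_add]
  exact le_antisymm hupper hlower

set_option maxHeartbeats 2000000 in
set_option synthInstance.maxHeartbeats 1000000 in
/-- Key analytic bound: any irreducible factor of `f(g)` of positive degree has
leading coefficient of large `X_j`-degree. -/
theorem key_bound {s : ℕ} (j : Fin s)
    (m n : ℕ) (hm : 0 < m) (hn : 0 < n)
    (a b : ℕ → MvPolynomial (Fin s) K)
    (ha0 : a 0 ≠ 0) (ham : a m ≠ 0) (hbn : b n ≠ 0)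
    (f g : Polynomial (MvPolynomial (Fin s) K))
    (hf : f = ∑ i ∈ Finset.range (m + 1), Polynomial.C (a i) * Polynomial.X ^ i)
    (hg : g = ∑ i ∈ Finset.range (n + 1), Polynomial.C (b i) * Polynomial.X ^ i)
    (Q : Polynomial (MvPolynomial (Fin s) K))
    (hQirr : Irreducible Q) (hQdeg : Q.natDegree ≠ 0)
    (hQdvd : Q ∣ Polynomial.aeval g f) :
    MvPolynomial.degreeOf j (a m) ≤ Hj a m j
      + m * n * MvPolynomial.degreeOf j Q.leadingCoeff := by
  classical
  by_cases hDH : MvPolynomial.degreeOf j (a m) ≤ Hj a m j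
  · exact le_trans hDH (Nat.le_add_right _ _)
  push_neg at hDH
  -- coefficients of f and g
  have hfco : ∀ i, i ≤ m → f.coeff i = a i := by
    intro i hi
    rw [hf, Polynomial.finset_sum_coeff]
    have hthis : ∀ i' ∈ Finset.range (m+1),
        (Polynomial.C (a i') * Polynomial.X ^ i').coeff i = if i' = i then a i' else 0 := by
      intro i' _
      rw [Polynomial.coeff_C_mul, Polynomial.coeff_X_pow]
      by_cases h : i = i' <;> simp [h, eq_comm]
    rw [Finset.sum_congr rfl hthis, Finset.sum_ite_eq' (Finset.range (m+1)) i a]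
    simp [Nat.lt_succ_iff, hi]
  have hfco' : ∀ i, m < i → f.coeff i = 0 := by
    intro i hi
    rw [hf, Polynomial.finset_sum_coeff]
    apply Finset.sum_eq_zero
    intro i' hi'
    rw [Polynomial.coeff_C_mul, Polynomial.coeff_X_pow]
    have : i ≠ i' := by simp at hi'; omega
    simp [this]
  have hgco : ∀ i, i ≤ n → g.coeff i = b i := by
    intro i hi
    rw [hg, Polynomial.finset_sum_coeff]
    have hthis : ∀ i' ∈ Finset.range (n+1),
        (Polynomial.C (b i') * Polynomial.X ^ i').coeff i = if i' = i then b i' else 0 := by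
      intro i' _
      rw [Polynomial.coeff_C_mul, Polynomial.coeff_X_pow]
      by_cases h : i = i' <;> simp [h, eq_comm]
    rw [Finset.sum_congr rfl hthis, Finset.sum_ite_eq' (Finset.range (n+1)) i b]
    simp [Nat.lt_succ_iff, hi]
  have hgco' : ∀ i, n < i → g.coeff i = 0 := by
    intro i hi
    rw [hg, Polynomial.finset_sum_coeff]
    apply Finset.sum_eq_zero
    intro i' hi'
    rw [Polynomial.coeff_C_mul, Polynomial.coeff_X_pow]
    have : i ≠ i' := by simp at hi'; omega
    simp [this]
  have hfne : f ≠ 0 := fun h0 => ham (by rw [← hfco m le_rfl, h0, Polynomial.coeff_zero])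
  have hgne : g ≠ 0 := fun h0 => hbn (by rw [← hgco n le_rfl, h0, Polynomial.coeff_zero])
  have hfdeg : f.natDegree = m := by
    apply le_antisymm
    · by_contra hcon
      push_neg at hcon
      exact Polynomial.mem_support_iff.1 (Polynomial.natDegree_mem_support_of_nonzero hfne)
        (hfco' _ hcon)
    · exact Polynomial.le_natDegree_of_ne_zero (by rw [hfco m le_rfl]; exact ham)
  have hgdeg : g.natDegree = n := by
    apply le_antisymm
    · by_contra hcon
      push_neg at hcon
      exact Polynomial.mem_support_iff.1 (Polynomial.natDegree_mem_support_of_nonzero hgne)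
        (hgco' _ hcon)
    · exact Polynomial.le_natDegree_of_ne_zero (by rw [hgco n le_rfl]; exact hbn)
  -- fraction field, map of Q
  have hιinj : Function.Injective (iot K s) := iot_injective
  set Qbar : Polynomial (FR K s) := Q.map (iot K s) with hQbar
  have hQne : Q ≠ 0 := hQirr.ne_zero
  have hQbar0 : Qbar ≠ 0 := fun h0 =>
    hQne (Polynomial.map_injective (iot K s) hιinj (by simpa using h0))
  have hQprim : Q.IsPrimitive := by
    intro rr hrr
    obtain ⟨t, ht⟩ := hrr
    rcases hQirr.isUnit_or_isUnit ht with h1 | h1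
    · exact Polynomial.isUnit_C.1 h1
    · exfalso
      have h2 := Polynomial.natDegree_eq_zero_of_isUnit h1
      have h3 : Q.natDegree ≤ 0 := by
        calc Q.natDegree ≤ (Polynomial.C rr).natDegree + t.natDegree :=
          ht ▸ Polynomial.natDegree_mul_le
        _ = 0 := by rw [Polynomial.natDegree_C, h2]
      exact hQdeg (Nat.le_zero.1 h3)
  letI : NormalizationMonoid (MvPolynomial (Fin s) K) :=
    UniqueFactorizationMonoid.normalizationMonoid.toNormalizationMonoid
  letI : NormalizedGCDMonoid (MvPolynomial (Fin s) K) :=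
    UniqueFactorizationMonoid.toNormalizedGCDMonoid (MvPolynomial (Fin s) K)
  have hQbarIrr : Irreducible Qbar :=
    (hQprim.irreducible_iff_irreducible_map_fraction_map (K := FR K s)).1 hQirr
  haveI : Fact (Irreducible Qbar) := ⟨hQbarIrr⟩
  haveI : Module.Finite (FR K s) (AdjoinRoot Qbar) := (AdjoinRoot.powerBasis hQbar0).finite
  haveI hTower : IsScalarTower (MvPolynomial (Fin s) K) (FR K s) (AdjoinRoot Qbar) :=
    inferInstance
  set ξ : AdjoinRoot Qbar := AdjoinRoot.root Qbar with hξ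
  set fbar : Polynomial (FR K s) := f.map (iot K s) with hfbar
  set gbar : Polynomial (FR K s) := g.map (iot K s) with hgbar
  have hfbar0 : fbar ≠ 0 := fun h0 =>
    hfne (Polynomial.map_injective (iot K s) hιinj (by simpa using h0))
  set θ : AdjoinRoot Qbar := Polynomial.aeval ξ gbar with hθ
  -- θ is a root of fbar
  have hPbar : (Polynomial.aeval g f).map (iot K s) = fbar.comp gbar := by
    have hcomp : Polynomial.aeval g f = f.comp g := by
      rw [Polynomial.aeval_def, Polynomial.comp, Polynomial.algebraMap_eq]
    rw [hcomp, Polynomial.map_comp]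
  have hQbar_dvd : Qbar ∣ (Polynomial.aeval g f).map (iot K s) :=
    Polynomial.map_dvd (iot K s) hQdvd
  have hθf : Polynomial.aeval θ fbar = 0 := by
    obtain ⟨Wp, hWp⟩ := hQbar_dvd
    have h1 : Polynomial.aeval ξ ((Polynomial.aeval g f).map (iot K s)) = 0 := by
      rw [hWp, map_mul]
      have hroot : Polynomial.aeval ξ Qbar = 0 := by
        rw [hξ, AdjoinRoot.aeval_eq, AdjoinRoot.mk_self]
      rw [hroot, zero_mul]
    rw [hPbar, Polynomial.aeval_comp] at h1
    exact h1
  have hψinj : Function.Injective (algebraMap (FR K s) (AdjoinRoot Qbar)) :=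
    (algebraMap (FR K s) (AdjoinRoot Qbar)).injective
  have hθ0 : θ ≠ 0 := by
    intro h0
    rw [h0] at hθf
    have h1 : Polynomial.aeval (0 : AdjoinRoot Qbar) fbar
        = algebraMap (FR K s) (AdjoinRoot Qbar) (fbar.coeff 0) := by
      rw [Polynomial.aeval_def, Polynomial.eval₂_at_zero]
    rw [h1] at hθf
    have h2 : fbar.coeff 0 = 0 := hψinj (by simpa using hθf)
    rw [hfbar, Polynomial.coeff_map, hfco 0 (Nat.zero_le m)] at h2
    exact ha0 (hιinj (by simpa using h2))
  have hθint : IsIntegral (FR K s) θ := IsIntegral.of_finite (FR K s) θ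
  set h : Polynomial (FR K s) := minpoly (FR K s) θ with hh
  have hhdvd : h ∣ fbar := minpoly.dvd (FR K s) θ hθf
  have hhmonic : h.Monic := minpoly.monic hθint
  have hh0 : h ≠ 0 := hhmonic.ne_zero
  set e := h.natDegree with he
  have he_pos : 0 < e := minpoly.natDegree_pos hθint
  have hfbardeg : fbar.natDegree = m := by
    rw [hfbar, Polynomial.natDegree_map_eq_of_injective hιinj, hfdeg]
  have he_le : e ≤ m := by
    rw [← hfbardeg]
    exact Polynomial.natDegree_le_of_dvd hhdvd hfbar0
  -- the Gauss valuation bound on h.coeff 0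
  set Dq : ℚ := (MvPolynomial.degreeOf j (a m) : ℚ) with hDq
  set Hq : ℚ := (Hj a m j : ℚ) with hHq
  have hDHq : Hq < Dq := by rw [hDq, hHq]; exact_mod_cast hDH
  set lam : ℚ := (Hq - Dq) / m with hlam
  have hmq : (m : ℚ) ≠ 0 := Nat.cast_ne_zero.2 hm.ne'
  have hlam_m : lam * m = Hq - Dq := by
    rw [hlam]; field_simp
  have hlam_neg : lam < 0 := by
    rw [hlam]
    apply div_neg_of_neg_of_pos (by linarith) (by exact_mod_cast hm)
  have hcoeff_bound : v0 j (h.coeff 0) ≤ lam * e := by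
    obtain ⟨u, hu⟩ := hhdvd
    have hu0 : u ≠ 0 := by
      intro h0; rw [h0, mul_zero] at hu; exact hfbar0 hu
    have hWmul := W_mul j lam hh0 hu0
    rw [← hu] at hWmul
    -- upper bound for W fbar
    have hWf : W j lam fbar ≤ ((Hq : ℚ) : WithBot ℚ) := by
      apply W_le
      intro i hi
      have hico : fbar.coeff i = iot K s (f.coeff i) := by rw [hfbar, Polynomial.coeff_map]
      have hine : f.coeff i ≠ 0 := by
        intro h0
        exact Polynomial.mem_support_iff.1 hi (by rw [hico, h0, map_zero])
      have hile : i ≤ m := by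
        by_contra hcon
        push_neg at hcon
        exact hine (hfco' i hcon)
      have hv : v0 j (fbar.coeff i) = (MvPolynomial.degreeOf j (f.coeff i) : ℚ) := by
        rw [hico, v0_iot j hine]; rfl
      rcases Nat.lt_or_ge i m with him | him
      · -- i < m
        have hH : (MvPolynomial.degreeOf j (f.coeff i) : ℚ) ≤ Hq := by
          rw [hfco i hile, hHq]
          have hsup : MvPolynomial.degreeOf j (a i) ≤ Hj a m j :=
            Finset.le_sup (f := fun i => MvPolynomial.degreeOf j (a i))
              (Finset.mem_range.2 him)
          exact_mod_cast hsup
        have hlami : lam * i ≤ 0 :=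
          mul_nonpos_of_nonpos_of_nonneg (le_of_lt hlam_neg) (Nat.cast_nonneg i)
        rw [hv]; linarith
      · -- i = m
        have him' : i = m := le_antisymm hile him
        subst him'
        rw [hv, hfco i le_rfl, ← hDq]
        linarith [hlam_m]
    -- lower bound for W u
    have hulead : u.leadingCoeff = iot K s (a m) := by
      have h1 : fbar.leadingCoeff = h.leadingCoeff * u.leadingCoeff := by
        rw [hu, Polynomial.leadingCoeff_mul]
      rw [hhmonic.leadingCoeff, one_mul] at h1
      rw [← h1, Polynomial.leadingCoeff, hfbardeg, hfbar, Polynomial.coeff_map, hfco m le_rfl]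
    have hudeg : u.natDegree = m - e := by
      have h1 : fbar.natDegree = h.natDegree + u.natDegree := by
        rw [hu, Polynomial.natDegree_mul hh0 hu0]
      rw [hfbardeg, ← he] at h1
      omega
    have hWu : ((Dq + lam * ((m - e : ℕ) : ℚ) : ℚ) : WithBot ℚ) ≤ W j lam u := by
      have hmem : u.natDegree ∈ u.support := by
        rw [Polynomial.mem_support_iff]
        intro h0
        have hne := Polynomial.leadingCoeff_ne_zero.2 hu0
        rw [Polynomial.leadingCoeff] at hne
        exact hne h0
      have hle := le_W j lam hmem
      have hval : v0 j (u.coeff u.natDegree) = Dq := by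
        have hc : u.coeff u.natDegree = iot K s (a m) := by
          rw [← hulead]; rfl
        rw [hc, v0_iot j ham]; rfl
      rw [hval, hudeg] at hle
      exact hle
    -- lower bound for W h at 0
    have hh0ne : h.coeff 0 ≠ 0 := minpoly.coeff_zero_ne_zero hθint hθ0
    have hWh : ((v0 j (h.coeff 0) : ℚ) : WithBot ℚ) ≤ W j lam h := by
      have hmem : 0 ∈ h.support := Polynomial.mem_support_iff.2 hh0ne
      have hle := le_W j lam hmem
      simpa using hle
    -- combine
    have hcomb : ((v0 j (h.coeff 0) + (Dq + lam * ((m - e : ℕ) : ℚ)) : ℚ) : WithBot ℚ)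
        ≤ ((Hq : ℚ) : WithBot ℚ) := by
      calc ((v0 j (h.coeff 0) + (Dq + lam * ((m - e : ℕ) : ℚ)) : ℚ) : WithBot ℚ)
          = ((v0 j (h.coeff 0) : ℚ) : WithBot ℚ)
            + ((Dq + lam * ((m - e : ℕ) : ℚ) : ℚ) : WithBot ℚ) := by
            rw [← WithBot.coe_add]
      _ ≤ W j lam h + W j lam u := add_le_add hWh hWu
      _ = W j lam fbar := hWmul.symm
      _ ≤ _ := hWf
    have hcomb' : v0 j (h.coeff 0) + (Dq + lam * ((m - e : ℕ) : ℚ)) ≤ Hq := by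
      exact_mod_cast hcomb
    have hcast : ((m - e : ℕ) : ℚ) = (m : ℚ) - (e : ℚ) := by
      rw [Nat.cast_sub he_le]
    rw [hcast] at hcomb'
    have hdist : lam * ((m : ℚ) - e) = lam * m - lam * e := by ring
    rw [hdist, hlam_m] at hcomb'
    linarith
  -- now the integrality argument
  set l := Q.leadingCoeff with hl
  have hl0 : l ≠ 0 := Polynomial.leadingCoeff_ne_zero.2 hQne
  set d := Q.natDegree with hd
  have hQbardeg : Qbar.natDegree = d := by
    rw [hQbar, Polynomial.natDegree_map_eq_of_injective hιinj]
  have hQbarlead : Qbar.leadingCoeff = iot K s l := by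
    rw [Polynomial.leadingCoeff, hQbardeg, hQbar, Polynomial.coeff_map]; rfl
  have hιl0 : iot K s l ≠ 0 := fun h0 => hl0 (hιinj (by simpa using h0))
  set uu : FR K s := (iot K s l) ^ n with huu
  have huu0 : uu ≠ 0 := pow_ne_zero _ hιl0
  set z : AdjoinRoot Qbar := algebraMap (FR K s) (AdjoinRoot Qbar) uu * θ with hz
  have hz0 : z ≠ 0 := mul_ne_zero (fun h0 => huu0 (hψinj (by simpa using h0))) hθ0
  -- y := ψ (ι l) * ξ is integral over the polynomial ring
  set y : AdjoinRoot Qbar := algebraMap (FR K s) (AdjoinRoot Qbar) (iot K s l) * ξ with hy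
  have hy_int : IsIntegral (MvPolynomial (Fin s) K) y := by
    set Qmon : Polynomial (FR K s) := Polynomial.C (iot K s l)⁻¹ * Qbar with hQmon
    have hQmon_monic : Qmon.Monic := by
      rw [Polynomial.Monic, hQmon, Polynomial.leadingCoeff_mul, Polynomial.leadingCoeff_C,
        hQbarlead, inv_mul_cancel₀ hιl0]
    have hQmonξ : Polynomial.aeval ξ Qmon = 0 := by
      rw [hQmon, map_mul]
      have hroot : Polynomial.aeval ξ Qbar = 0 := by
        rw [hξ, AdjoinRoot.aeval_eq, AdjoinRoot.mk_self]
      rw [hroot, mul_zero]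
    have hyroot : Polynomial.aeval y (Qmon.scaleRoots (iot K s l)) = 0 := by
      rw [hy]
      exact Polynomial.scaleRoots_aeval_eq_zero hQmonξ
    have hQmondeg : Qmon.natDegree = d := by
      rw [hQmon, Polynomial.natDegree_C_mul (inv_ne_zero hιl0), hQbardeg]
    set T₀ : Polynomial (MvPolynomial (Fin s) K) := Polynomial.X ^ d
      + ∑ i ∈ Finset.range d, Polynomial.C (Q.coeff i * l ^ (d - 1 - i)) * Polynomial.X ^ i
      with hT₀
    have hT₀map : T₀.map (iot K s) = Qmon.scaleRoots (iot K s l) := by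
      ext k
      rw [Polynomial.coeff_map, Polynomial.coeff_scaleRoots, hQmondeg]
      rw [hT₀, Polynomial.coeff_add, Polynomial.coeff_X_pow, Polynomial.finset_sum_coeff]
      have hsum : ∀ i ∈ Finset.range d,
          (Polynomial.C (Q.coeff i * l ^ (d - 1 - i)) * Polynomial.X ^ i).coeff k
          = if i = k then Q.coeff i * l ^ (d - 1 - i) else 0 := by
        intro i _
        rw [Polynomial.coeff_C_mul, Polynomial.coeff_X_pow]
        by_cases hik : k = i <;> simp [hik, eq_comm]
      rw [Finset.sum_congr rfl hsum,
        Finset.sum_ite_eq' (Finset.range d) k (fun i => Q.coeff i * l ^ (d - 1 - i))]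
      have hQmonco : ∀ i, Qmon.coeff i = (iot K s l)⁻¹ * iot K s (Q.coeff i) := by
        intro i
        rw [hQmon, Polynomial.coeff_C_mul, hQbar, Polynomial.coeff_map]
      by_cases hkd : k < d
      · have hkd' : k ≠ d := by omega
        rw [if_neg hkd', if_pos (Finset.mem_range.2 hkd), zero_add,
          map_mul, map_pow, hQmonco k]
        have hdk : d - k = (d - 1 - k) + 1 := by omega
        rw [hdk, pow_succ]
        field_simp
      · push_neg at hkd
        rcases eq_or_lt_of_le hkd with hkd2 | hkd2
        · subst hkd2
          have h2 : ¬ (d ∈ Finset.range d) := by simp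
          rw [if_pos rfl, if_neg h2, add_zero, map_one, Nat.sub_self, pow_zero, mul_one,
            hQmonco d]
          have hQcd : Q.coeff d = l := by rw [hl, Polynomial.leadingCoeff, ← hd]
          rw [hQcd, inv_mul_cancel₀ hιl0]
        · have h1 : k ≠ d := by omega
          have h2 : ¬ (k ∈ Finset.range d) := by simp; omega
          rw [if_neg h1, if_neg h2, add_zero, map_zero, hQmonco k]
          have hQck : Q.coeff k = 0 := Polynomial.coeff_eq_zero_of_natDegree_lt (by omega)
          rw [hQck, map_zero, mul_zero, zero_mul]
    have hT₀monic : T₀.Monic := by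
      have hsumdeg : (∑ i ∈ Finset.range d,
          Polynomial.C (Q.coeff i * l ^ (d - 1 - i)) * Polynomial.X ^ i).degree
            < ((d : ℕ) : WithBot ℕ) := by
        apply lt_of_le_of_lt (Polynomial.degree_sum_le _ _)
        rw [Finset.sup_lt_iff (by exact_mod_cast WithBot.bot_lt_coe d)]
        intro i hi
        apply lt_of_le_of_lt (Polynomial.degree_C_mul_X_pow_le _ _)
        exact_mod_cast Finset.mem_range.1 hi
      rw [hT₀]
      exact Polynomial.monic_X_pow_add (by exact_mod_cast hsumdeg)
    refine ⟨T₀, hT₀monic, ?_⟩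
    have h1 : Polynomial.aeval y (T₀.map (iot K s)) = 0 := by rw [hT₀map]; exact hyroot
    rw [Polynomial.aeval_map_algebraMap] at h1
    rw [← Polynomial.aeval_def]
    exact h1
  -- z = sum over i of algebraMap (b i * l^(n-i)) * y^i
  have hgbar_deg : gbar.natDegree = n := by
    rw [hgbar, Polynomial.natDegree_map_eq_of_injective hιinj, hgdeg]
  have hAM : ∀ r : MvPolynomial (Fin s) K,
      algebraMap (MvPolynomial (Fin s) K) (AdjoinRoot Qbar) r
        = algebraMap (FR K s) (AdjoinRoot Qbar) (iot K s r) := by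
    intro r
    rw [IsScalarTower.algebraMap_eq (MvPolynomial (Fin s) K) (FR K s) (AdjoinRoot Qbar)]
    rfl
  have hz_eq : z = ∑ i ∈ Finset.range (n+1),
      algebraMap (MvPolynomial (Fin s) K) (AdjoinRoot Qbar) (b i * l ^ (n - i)) * y ^ i := by
    rw [hz, hθ, Polynomial.aeval_eq_sum_range, hgbar_deg, Finset.mul_sum]
    apply Finset.sum_congr rfl
    intro i hi
    have hin : i ≤ n := Nat.lt_succ_iff.1 (Finset.mem_range.1 hi)
    have hco : gbar.coeff i = iot K s (b i) := by
      rw [hgbar, Polynomial.coeff_map, hgco i hin]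
    rw [hco, Algebra.smul_def, hAM (b i * l ^ (n - i)), hy, mul_pow, huu]
    rw [map_mul, map_pow, map_pow, map_mul, map_pow]
    have hnn : (algebraMap (FR K s) (AdjoinRoot Qbar) (iot K s l)) ^ (n - i)
        * (algebraMap (FR K s) (AdjoinRoot Qbar) (iot K s l)) ^ i
        = (algebraMap (FR K s) (AdjoinRoot Qbar) (iot K s l)) ^ n := by
      rw [← pow_add]
      congr 1
      omega
    linear_combination (-(algebraMap (FR K s) (AdjoinRoot Qbar) (iot K s (b i)) * ξ ^ i)) * hnn
  have hz_int : IsIntegral (MvPolynomial (Fin s) K) z := by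
    have hmem : z ∈ integralClosure (MvPolynomial (Fin s) K) (AdjoinRoot Qbar) := by
      rw [hz_eq]
      apply Subalgebra.sum_mem
      intro i _
      exact Subalgebra.mul_mem _ (Subalgebra.algebraMap_mem _ _)
        (Subalgebra.pow_mem _ hy_int i)
    exact hmem
  have hzintL : IsIntegral (FR K s) z := IsIntegral.of_finite (FR K s) z
  -- minpoly (FR K s) z = h.scaleRoots uu
  have hscz : Polynomial.aeval z (h.scaleRoots uu) = 0 := by
    rw [hz]
    exact Polynomial.scaleRoots_aeval_eq_zero (minpoly.aeval (FR K s) θ)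
  obtain ⟨w, hw⟩ := minpoly.dvd (FR K s) z hscz
  have hw_unscaled : h = (minpoly (FR K s) z).scaleRoots uu⁻¹ * w.scaleRoots uu⁻¹ := by
    have h1 : (h.scaleRoots uu).scaleRoots uu⁻¹ = h := by
      rw [← Polynomial.scaleRoots_mul, mul_inv_cancel₀ huu0, Polynomial.scaleRoots_one]
    rw [← h1, hw, Polynomial.mul_scaleRoots_of_noZeroDivisors]
  have hA_monic : ((minpoly (FR K s) z).scaleRoots uu⁻¹).Monic :=
    (Polynomial.monic_scaleRoots_iff _).2 (minpoly.monic hzintL)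
  have hirr : Irreducible h := minpoly.irreducible hθint
  have hB_unit : IsUnit (w.scaleRoots uu⁻¹) := by
    rcases hirr.isUnit_or_isUnit hw_unscaled with h1 | h1
    · exfalso
      have h2 := Polynomial.natDegree_eq_zero_of_isUnit h1
      rw [Polynomial.natDegree_scaleRoots] at h2
      have h3 := minpoly.natDegree_pos hzintL
      omega
    · exact h1
  have hminz_eq : minpoly (FR K s) z = h.scaleRoots uu := by
    have hBdeg : (w.scaleRoots uu⁻¹).natDegree = 0 :=
      Polynomial.natDegree_eq_zero_of_isUnit hB_unit
    have hBC := Polynomial.eq_C_of_natDegree_eq_zero hBdeg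
    have hc : (w.scaleRoots uu⁻¹).coeff 0 = 1 := by
      have h2 := congrArg Polynomial.leadingCoeff hw_unscaled
      rw [Polynomial.leadingCoeff_mul, hA_monic.leadingCoeff, one_mul,
        hhmonic.leadingCoeff] at h2
      rw [hBC, Polynomial.leadingCoeff_C] at h2
      exact h2.symm
    have hB1 : w.scaleRoots uu⁻¹ = 1 := by rw [hBC, hc, map_one]
    have hhA : h = (minpoly (FR K s) z).scaleRoots uu⁻¹ := by rw [hw_unscaled, hB1, mul_one]
    have h4 : h.scaleRoots uu = ((minpoly (FR K s) z).scaleRoots uu⁻¹).scaleRoots uu := by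
      rw [← hhA]
    rw [← Polynomial.scaleRoots_mul, inv_mul_cancel₀ huu0, Polynomial.scaleRoots_one] at h4
    exact h4.symm
  have hc0L : (minpoly (FR K s) z).coeff 0 = h.coeff 0 * uu ^ e := by
    rw [hminz_eq, Polynomial.coeff_scaleRoots, Nat.sub_zero, ← he]
  -- the minimal polynomial over the polynomial ring
  have hmineq := minpoly.isIntegrallyClosed_eq_field_fractions' (FR K s) hz_int
  set c₀ : MvPolynomial (Fin s) K := (minpoly (MvPolynomial (Fin s) K) z).coeff 0 with hc₀
  have hc0map : iot K s c₀ = (minpoly (FR K s) z).coeff 0 := by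
    rw [hmineq, Polynomial.coeff_map]
  have hc0L_ne : (minpoly (FR K s) z).coeff 0 ≠ 0 := minpoly.coeff_zero_ne_zero hzintL hz0
  have hc₀ne : c₀ ≠ 0 := fun h0 => hc0L_ne (by rw [← hc0map, h0, map_zero])
  -- valuation computation
  have hh0ne : h.coeff 0 ≠ 0 := minpoly.coeff_zero_ne_zero hθint hθ0
  have huue : uu ^ e = (iot K s l) ^ (n * e) := by rw [huu, ← pow_mul]
  have huue0 : uu ^ e ≠ 0 := pow_ne_zero _ huu0
  have hv_c0 : (MvPolynomial.degreeOf j c₀ : ℚ)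
      = v0 j (h.coeff 0) + ((n * e : ℕ) : ℚ) * dg j l := by
    have h1 : v0 j (iot K s c₀) = dg j c₀ := v0_iot j hc₀ne
    have h2 : v0 j (iot K s c₀) = v0 j (h.coeff 0) + v0 j (uu ^ e) := by
      rw [hc0map, hc0L, v0_mul j hh0ne huue0]
    have h3 : v0 j (uu ^ e) = ((n * e : ℕ) : ℚ) * dg j l := by
      rw [huue, v0_pow j hιl0, v0_iot j hl0]
    have h4 : dg j c₀ = v0 j (h.coeff 0) + ((n * e : ℕ) : ℚ) * dg j l := by
      rw [← h1, h2, h3]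
    simpa [dg] using h4
  have hge0 : (0 : ℚ) ≤ (MvPolynomial.degreeOf j c₀ : ℚ) := Nat.cast_nonneg _
  have hfinal : (0 : ℚ) ≤ lam * e + ((n * e : ℕ) : ℚ) * dg j l := by
    rw [hv_c0] at hge0
    linarith [hcoeff_bound]
  have hm0 : (0 : ℚ) < m := by exact_mod_cast hm
  have he_q : (0 : ℚ) < e := by exact_mod_cast he_pos
  have hdgl0 : (0 : ℚ) ≤ dg j l := Nat.cast_nonneg _
  have hcast_ne : ((n * e : ℕ) : ℚ) = (n : ℚ) * e := by push_cast; ring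
  rw [hcast_ne] at hfinal
  have h3 : lam * (m : ℚ) * e = (Hq - Dq) * e := by rw [hlam_m]
  have h2 : (0 : ℚ) ≤ (Hq - Dq) * e + (m : ℚ) * ((n : ℚ) * e) * dg j l := by
    nlinarith [hfinal, hm0, h3]
  have hmain : Dq - Hq ≤ (m : ℚ) * n * dg j l := by
    nlinarith [h2, he_q]
  have hfin : Dq ≤ Hq + ((m * n * MvPolynomial.degreeOf j Q.leadingCoeff : ℕ) : ℚ) := by
    have : dg j l = (MvPolynomial.degreeOf j Q.leadingCoeff : ℚ) := by rw [dg, hl]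
    rw [this] at hmain
    push_cast
    linarith
  rw [hDq, hHq] at hfin
  exact_mod_cast hfin


-- ====== Part E ======

theorem Omega_eq_card_of_factorization {α : Type*} [CommMonoidWithZero α] [IsCancelMulZero α]
    [Nontrivial α] [UniqueFactorizationMonoid α] {x : α} {M : Multiset α}
    (hM : ∀ a ∈ M, Irreducible a) (hx : Associated M.prod x) :
    Omega x = Multiset.card M := by
  have hx0 : x ≠ 0 := by
    intro h0
    rw [h0] at hx
    have hM0 : M.prod = 0 := (associated_zero_iff_eq_zero _).1 hx
    exact Multiset.prod_ne_zero (fun h0mem => not_irreducible_zero (hM 0 h0mem)) hM0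
  have h1 := UniqueFactorizationMonoid.factors_prod hx0
  have h2 := UniqueFactorizationMonoid.factors_unique
    (fun q hq => UniqueFactorizationMonoid.irreducible_of_factor q hq) hM
    (h1.trans hx.symm)
  exact Multiset.card_eq_card_of_rel h2

theorem Omega_eq_card_normalizedFactors {α : Type*} [CommMonoidWithZero α] [IsCancelMulZero α]
    [Nontrivial α] [UniqueFactorizationMonoid α] [NormalizationMonoid α] {x : α} (hx : x ≠ 0) :
    Omega x = Multiset.card (UniqueFactorizationMonoid.normalizedFactors x) :=
  Omega_eq_card_of_factorization
    (fun a ha => UniqueFactorizationMonoid.irreducible_of_normalized_factor a ha)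
    (UniqueFactorizationMonoid.prod_normalizedFactors hx)

theorem multiset_decompose {α : Type*} [DecidableEq α] (P A B : Multiset α)
    (h : P ≤ A + B) : P ∩ A ≤ A ∧ P - A ≤ B ∧ (P ∩ A) + (P - A) = P := by
  refine ⟨Multiset.inter_le_right, ?_, ?_⟩
  · rw [Multiset.sub_le_iff_le_add]
    rwa [add_comm] at h
  · ext x
    rw [Multiset.count_add, Multiset.count_inter, Multiset.count_sub]
    omega

theorem multiset_counting {α : Type*} [DecidableEq α] :
    ∀ (parts : Multiset (Multiset α)) (A B : Multiset α),
      parts.sum ≤ A + B → (∀ p ∈ parts, ¬ p ≤ A) →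
        Multiset.card parts ≤ Multiset.card B := by
  intro parts
  induction parts using Multiset.induction_on with
  | empty => intro A B _ _; simp
  | cons P parts ih =>
    intro A B hsum hnotle
    rw [Multiset.sum_cons] at hsum
    have hPle : P ≤ A + B := le_trans (Multiset.le_add_right _ _) hsum
    obtain ⟨hPA, hPB, hdec⟩ := multiset_decompose P A B hPle
    have hPBne : P - A ≠ 0 := by
      intro h0
      rw [h0, add_zero] at hdec
      exact hnotle P (Multiset.mem_cons_self _ _) (hdec ▸ hPA)
    have hrest : parts.sum ≤ (A - P ∩ A) + (B - (P - A)) := by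
      rw [Multiset.le_iff_count]
      intro x
      have h1 := Multiset.le_iff_count.1 hsum x
      simp only [Multiset.count_add, Multiset.count_sub, Multiset.count_inter] at h1 ⊢
      omega
    have hrest_notle : ∀ p ∈ parts, ¬ p ≤ A - P ∩ A := by
      intro p hp hle
      exact hnotle p (Multiset.mem_cons_of_mem hp)
        (le_trans hle (Multiset.sub_le_self _ _))
    have := ih (A - P ∩ A) (B - (P - A)) hrest hrest_notle
    have hcardsub : Multiset.card (B - (P - A)) = Multiset.card B - Multiset.card (P - A) := by
      have := Multiset.card_sub hPB
      exact this
    have hpos : 0 < Multiset.card (P - A) := Multiset.card_pos.2 hPBne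
    have hcardle : Multiset.card (P - A) ≤ Multiset.card B := Multiset.card_le_card hPB
    rw [Multiset.card_cons]
    omega

theorem mvdeg_multiset_prod (j : Fin s) (M : Multiset (MvPolynomial (Fin s) K))
    (hM : ∀ p ∈ M, p ≠ (0 : MvPolynomial (Fin s) K)) :
    MvPolynomial.degreeOf j M.prod = (M.map (MvPolynomial.degreeOf j)).sum := by
  revert hM
  induction M using Multiset.induction_on with
  | empty =>
    intro _
    simp only [Multiset.prod_zero, Multiset.map_zero, Multiset.sum_zero]
    simp [MvPolynomial.degreeOf]
  | cons p M ih =>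
    intro hM
    have hp : p ≠ 0 := hM p (Multiset.mem_cons_self _ _)
    have hM' : ∀ q ∈ M, q ≠ (0 : MvPolynomial (Fin s) K) :=
      fun q hq => hM q (Multiset.mem_cons_of_mem hq)
    have hMprod : M.prod ≠ 0 :=
      Multiset.prod_ne_zero (fun h0mem => hM' 0 h0mem rfl)
    rw [Multiset.prod_cons, mvdeg_mul j hp hMprod, Multiset.map_cons, Multiset.sum_cons,
      ih hM']

theorem weight_normalizedFactors (j : Fin s) [NormalizationMonoid (MvPolynomial (Fin s) K)]
    {x : MvPolynomial (Fin s) K} (hx : x ≠ 0) :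
    ((UniqueFactorizationMonoid.normalizedFactors x).map (MvPolynomial.degreeOf j)).sum
      = MvPolynomial.degreeOf j x := by
  obtain ⟨u, hu⟩ := UniqueFactorizationMonoid.prod_normalizedFactors hx
  have hne : ∀ p ∈ UniqueFactorizationMonoid.normalizedFactors x,
      p ≠ (0 : MvPolynomial (Fin s) K) :=
    fun p hp => (UniqueFactorizationMonoid.irreducible_of_normalized_factor p hp).ne_zero
  have hprodne : (UniqueFactorizationMonoid.normalizedFactors x).prod ≠ 0 :=
    Multiset.prod_ne_zero (fun h0mem => hne 0 h0mem rfl)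
  have h1 : MvPolynomial.degreeOf j x
      = MvPolynomial.degreeOf j ((UniqueFactorizationMonoid.normalizedFactors x).prod)
        + MvPolynomial.degreeOf j (u : MvPolynomial (Fin s) K) := by
    rw [← mvdeg_mul j hprodne (Units.ne_zero u), hu]
  rw [mvdeg_unit j u.isUnit] at h1
  rw [mvdeg_multiset_prod j _ hne] at h1
  omega

theorem prod_isUnit {α : Type*} [CommMonoid α] (M : Multiset α) (h : ∀ x ∈ M, IsUnit x) :
    IsUnit M.prod := by
  induction M using Multiset.induction_on with
  | empty => simp
  | cons p M ih =>
    rw [Multiset.prod_cons]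
    exact (h p (Multiset.mem_cons_self _ _)).mul
      (ih fun x hx => h x (Multiset.mem_cons_of_mem hx))

set_option maxHeartbeats 2000000 in
set_option synthInstance.maxHeartbeats 1000000 in
theorem aux_main {s : ℕ} (j : Fin s)
    (m n : ℕ) (hm : 0 < m) (hn : 0 < n)
    (a b : ℕ → MvPolynomial (Fin s) K)
    (d₁ d₂ : MvPolynomial (Fin s) K)
    (ha0 : a 0 ≠ 0) (ham : a m ≠ 0) (hbn : b n ≠ 0)
    (f g : Polynomial (MvPolynomial (Fin s) K))
    (hf : f = ∑ i ∈ Finset.range (m + 1), Polynomial.C (a i) * Polynomial.X ^ i)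
    (hg : g = ∑ i ∈ Finset.range (n + 1), Polynomial.C (b i) * Polynomial.X ^ i)
    (hdeg : MvPolynomial.degreeOf j (a m) >
      m * n * MvPolynomial.degreeOf j d₁ + m ^ 2 * n * MvPolynomial.degreeOf j d₂
        + Hj a m j)
    (e₁ e₂ : MvPolynomial (Fin s) K) (he₁ : a m = d₁ * e₁) (he₂ : b n = d₂ * e₂) :
    Omega ((Polynomial.aeval g f).map
        (algebraMap (MvPolynomial (Fin s) K) (FractionRing (MvPolynomial (Fin s) K))))
      ≤ Omega e₁ + m * Omega e₂ := by
  classical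
  letI : NormalizationMonoid (MvPolynomial (Fin s) K) :=
    UniqueFactorizationMonoid.normalizationMonoid.toNormalizationMonoid
  letI : NormalizedGCDMonoid (MvPolynomial (Fin s) K) :=
    UniqueFactorizationMonoid.toNormalizedGCDMonoid (MvPolynomial (Fin s) K)
  -- basic coefficient facts
  have hfco : ∀ i, i ≤ m → f.coeff i = a i := by
    intro i hi
    rw [hf, Polynomial.finset_sum_coeff]
    have hthis : ∀ i' ∈ Finset.range (m+1),
        (Polynomial.C (a i') * Polynomial.X ^ i').coeff i = if i' = i then a i' else 0 := by
      intro i' _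
      rw [Polynomial.coeff_C_mul, Polynomial.coeff_X_pow]
      by_cases h : i = i' <;> simp [h, eq_comm]
    rw [Finset.sum_congr rfl hthis, Finset.sum_ite_eq' (Finset.range (m+1)) i a]
    simp [Nat.lt_succ_iff, hi]
  have hfco' : ∀ i, m < i → f.coeff i = 0 := by
    intro i hi
    rw [hf, Polynomial.finset_sum_coeff]
    apply Finset.sum_eq_zero
    intro i' hi'
    rw [Polynomial.coeff_C_mul, Polynomial.coeff_X_pow]
    have : i ≠ i' := by simp at hi'; omega
    simp [this]
  have hgco : ∀ i, i ≤ n → g.coeff i = b i := by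
    intro i hi
    rw [hg, Polynomial.finset_sum_coeff]
    have hthis : ∀ i' ∈ Finset.range (n+1),
        (Polynomial.C (b i') * Polynomial.X ^ i').coeff i = if i' = i then b i' else 0 := by
      intro i' _
      rw [Polynomial.coeff_C_mul, Polynomial.coeff_X_pow]
      by_cases h : i = i' <;> simp [h, eq_comm]
    rw [Finset.sum_congr rfl hthis, Finset.sum_ite_eq' (Finset.range (n+1)) i b]
    simp [Nat.lt_succ_iff, hi]
  have hgco' : ∀ i, n < i → g.coeff i = 0 := by
    intro i hi
    rw [hg, Polynomial.finset_sum_coeff]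
    apply Finset.sum_eq_zero
    intro i' hi'
    rw [Polynomial.coeff_C_mul, Polynomial.coeff_X_pow]
    have : i ≠ i' := by simp at hi'; omega
    simp [this]
  have hfne : f ≠ 0 := fun h0 => ham (by rw [← hfco m le_rfl, h0, Polynomial.coeff_zero])
  have hgne : g ≠ 0 := fun h0 => hbn (by rw [← hgco n le_rfl, h0, Polynomial.coeff_zero])
  have hfdeg : f.natDegree = m := by
    apply le_antisymm
    · by_contra hcon
      push_neg at hcon
      exact Polynomial.mem_support_iff.1 (Polynomial.natDegree_mem_support_of_nonzero hfne)
        (hfco' _ hcon)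
    · exact Polynomial.le_natDegree_of_ne_zero (by rw [hfco m le_rfl]; exact ham)
  have hgdeg : g.natDegree = n := by
    apply le_antisymm
    · by_contra hcon
      push_neg at hcon
      exact Polynomial.mem_support_iff.1 (Polynomial.natDegree_mem_support_of_nonzero hgne)
        (hgco' _ hcon)
    · exact Polynomial.le_natDegree_of_ne_zero (by rw [hgco n le_rfl]; exact hbn)
  have hPcomp : Polynomial.aeval g f = f.comp g := by
    rw [Polynomial.aeval_def, Polynomial.comp, Polynomial.algebraMap_eq]
  have hflead : f.leadingCoeff = a m := by
    rw [Polynomial.leadingCoeff, hfdeg, hfco m le_rfl]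
  have hglead : g.leadingCoeff = b n := by
    rw [Polynomial.leadingCoeff, hgdeg, hgco n le_rfl]
  have hambn : a m * b n ^ m ≠ 0 := mul_ne_zero ham (pow_ne_zero _ hbn)
  have hPlead : (Polynomial.aeval g f).leadingCoeff = a m * b n ^ m := by
    rw [hPcomp, Polynomial.leadingCoeff_comp (by rw [hgdeg]; omega), hflead, hglead, hfdeg]
  have hPne : Polynomial.aeval g f ≠ 0 := by
    intro h0
    rw [h0, Polynomial.leadingCoeff_zero] at hPlead
    exact hambn hPlead.symm
  -- factorization of P in R[X]
  set P := Polynomial.aeval g f with hP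
  set Ψ := UniqueFactorizationMonoid.factors P with hΨ
  have hΨprod : Associated Ψ.prod P := UniqueFactorizationMonoid.factors_prod hPne
  have hΨirr : ∀ Q ∈ Ψ, Irreducible Q :=
    fun Q hQ => UniqueFactorizationMonoid.irreducible_of_factor Q hQ
  set Ψp := Ψ.filter (fun Q => Q.natDegree ≠ 0) with hΨp
  set Ψz := Ψ.filter (fun Q => ¬ Q.natDegree ≠ 0) with hΨz
  have hsplit : Ψp + Ψz = Ψ := Multiset.filter_add_not _ _
  have hΨne : ∀ Q ∈ Ψ, Q ≠ 0 := fun Q hQ => (hΨirr Q hQ).ne_zero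
  -- primitivity of positive-degree irreducible factors
  have hprim : ∀ Q ∈ Ψp, (Q : Polynomial (MvPolynomial (Fin s) K)).IsPrimitive := by
    intro Q hQ
    have hQirr := hΨirr Q (Multiset.mem_of_mem_filter hQ)
    have hQdeg : Q.natDegree ≠ 0 := (Multiset.mem_filter.1 hQ).2
    intro rr hrr
    obtain ⟨t, ht⟩ := hrr
    rcases hQirr.isUnit_or_isUnit ht with h1 | h1
    · exact Polynomial.isUnit_C.1 h1
    · exfalso
      have h2 := Polynomial.natDegree_eq_zero_of_isUnit h1
      have h3 : Q.natDegree ≤ 0 := by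
        calc Q.natDegree ≤ (Polynomial.C rr).natDegree + t.natDegree :=
          ht ▸ Polynomial.natDegree_mul_le
        _ = 0 := by rw [Polynomial.natDegree_C, h2]
      exact hQdeg (Nat.le_zero.1 h3)
  -- Omega of the image equals card Ψp
  have hOmega : Omega (P.map (iot K s)) = Multiset.card Ψp := by
    have hcard : Multiset.card (Ψp.map (Polynomial.map (iot K s))) = Multiset.card Ψp :=
      Multiset.card_map _ _
    rw [← hcard]
    apply Omega_eq_card_of_factorization
    · intro G hG
      obtain ⟨Q, hQ, rfl⟩ := Multiset.mem_map.1 hG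
      exact ((hprim Q hQ).irreducible_iff_irreducible_map_fraction_map (K := FR K s)).1
        (hΨirr Q (Multiset.mem_of_mem_filter hQ))
    · -- product associated
      have hunit : IsUnit ((Ψz.map (Polynomial.map (iot K s))).prod) := by
        apply prod_isUnit
        intro x hx
        obtain ⟨Q, hQ, rfl⟩ := Multiset.mem_map.1 hx
        have hQdeg0 : Q.natDegree = 0 := by
          have := Multiset.of_mem_filter hQ
          simpa using this
        have hQ0 : Q ≠ 0 := hΨne Q (Multiset.mem_of_mem_filter hQ)
        have hQC := Polynomial.eq_C_of_natDegree_eq_zero hQdeg0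
        have hc0 : Q.coeff 0 ≠ 0 := by
          intro h0; rw [hQC, h0, map_zero] at hQ0; exact hQ0 rfl
        rw [hQC, Polynomial.map_C]
        exact Polynomial.isUnit_C.2 (isUnit_iff_ne_zero.2
          (fun h0 => hc0 (iot_injective (by simpa using h0))))
      have hmapprod : (Ψ.map (Polynomial.map (iot K s))).prod = Ψ.prod.map (iot K s) := by
        rw [← Polynomial.coe_mapRingHom, Multiset.prod_hom]
      have hsplit' : Ψp.map (Polynomial.map (iot K s)) + Ψz.map (Polynomial.map (iot K s))
          = Ψ.map (Polynomial.map (iot K s)) := by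
        rw [← Multiset.map_add, hsplit]
      have hassoc1 : Associated ((Ψp.map (Polynomial.map (iot K s))).prod)
          ((Ψ.map (Polynomial.map (iot K s))).prod) := by
        rw [← hsplit', Multiset.prod_add]
        obtain ⟨v, hv⟩ := hunit
        exact ⟨v, by rw [hv]⟩
      have hassoc2 : Associated (Ψ.prod.map (iot K s)) (P.map (iot K s)) := by
        obtain ⟨u, hu⟩ := hΨprod
        refine ⟨Units.map (Polynomial.mapRingHom (iot K s)).toMonoidHom u, ?_⟩
        rw [← hu]
        simp [Polynomial.coe_mapRingHom]
      exact (hassoc1.trans (hmapprod ▸ Associated.refl _)).trans hassoc2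
  -- leading coefficients divide a m * b n ^ m
  have hleads : ((Ψp.map Polynomial.leadingCoeff)).prod ∣ a m * b n ^ m := by
    obtain ⟨u, hu⟩ := hΨprod
    have h1 : Ψ.prod.leadingCoeff * (u : Polynomial (MvPolynomial (Fin s) K)).leadingCoeff
        = a m * b n ^ m := by
      rw [← Polynomial.leadingCoeff_mul, hu, ← hPlead]
    have h2 : Ψ.prod.leadingCoeff = (Ψ.map Polynomial.leadingCoeff).prod :=
      Polynomial.leadingCoeff_multiset_prod _
    have h3 : (Ψ.map Polynomial.leadingCoeff).prod
        = (Ψp.map Polynomial.leadingCoeff).prod * (Ψz.map Polynomial.leadingCoeff).prod := by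
      rw [← Multiset.prod_add, ← Multiset.map_add, hsplit]
    exact ⟨(Ψz.map Polynomial.leadingCoeff).prod
      * (u : Polynomial (MvPolynomial (Fin s) K)).leadingCoeff, by
        rw [← h1, h2, h3]; ring⟩
  -- each factor has large leading-coefficient degree
  have hQbound : ∀ Q ∈ Ψp,
      MvPolynomial.degreeOf j d₁ + m * MvPolynomial.degreeOf j d₂
        < MvPolynomial.degreeOf j Q.leadingCoeff := by
    intro Q hQ
    have hQΨ : Q ∈ Ψ := Multiset.mem_of_mem_filter hQ
    have hQdvd : Q ∣ P := (Multiset.dvd_prod hQΨ).trans hΨprod.dvd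
    have hkb := key_bound j m n hm hn a b ha0 ham hbn f g hf hg Q (hΨirr Q hQΨ)
      ((Multiset.mem_filter.1 hQ).2) hQdvd
    have h1 : m * n * MvPolynomial.degreeOf j d₁ + m ^ 2 * n * MvPolynomial.degreeOf j d₂
        + Hj a m j < Hj a m j + m * n * MvPolynomial.degreeOf j Q.leadingCoeff :=
      lt_of_lt_of_le hdeg hkb
    have h2 : m * n * MvPolynomial.degreeOf j d₁ + m ^ 2 * n * MvPolynomial.degreeOf j d₂
        < m * n * MvPolynomial.degreeOf j Q.leadingCoeff := by linarith
    have h3 : m * n * (MvPolynomial.degreeOf j d₁ + m * MvPolynomial.degreeOf j d₂)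
        < m * n * MvPolynomial.degreeOf j Q.leadingCoeff := by
      have e : m * n * (MvPolynomial.degreeOf j d₁ + m * MvPolynomial.degreeOf j d₂)
          = m * n * MvPolynomial.degreeOf j d₁ + m ^ 2 * n * MvPolynomial.degreeOf j d₂ := by
        ring
      rw [e]; exact h2
    exact Nat.lt_of_mul_lt_mul_left h3
  -- nonzero-ness of the pieces
  have hd₁0 : d₁ ≠ 0 := fun h0 => ham (by rw [he₁, h0, zero_mul])
  have he₁0 : e₁ ≠ 0 := fun h0 => ham (by rw [he₁, h0, mul_zero])
  have hd₂0 : d₂ ≠ 0 := fun h0 => hbn (by rw [he₂, h0, zero_mul])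
  have he₂0 : e₂ ≠ 0 := fun h0 => hbn (by rw [he₂, h0, mul_zero])
  -- multiset of normalized factors
  have hABprod : UniqueFactorizationMonoid.normalizedFactors (a m * b n ^ m)
      = (UniqueFactorizationMonoid.normalizedFactors d₁
          + m • UniqueFactorizationMonoid.normalizedFactors d₂)
        + (UniqueFactorizationMonoid.normalizedFactors e₁
          + m • UniqueFactorizationMonoid.normalizedFactors e₂) := by
    rw [he₁, he₂, mul_pow,
      UniqueFactorizationMonoid.normalizedFactors_mul (mul_ne_zero hd₁0 he₁0)
        (mul_ne_zero (pow_ne_zero _ hd₂0) (pow_ne_zero _ he₂0)),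
      UniqueFactorizationMonoid.normalizedFactors_mul hd₁0 he₁0,
      UniqueFactorizationMonoid.normalizedFactors_mul (pow_ne_zero _ hd₂0)
        (pow_ne_zero _ he₂0),
      UniqueFactorizationMonoid.normalizedFactors_pow,
      UniqueFactorizationMonoid.normalizedFactors_pow]
    abel
  -- parts are ≤ A + B
  have hleadne : ∀ Q ∈ Ψp, Q.leadingCoeff ≠ 0 := by
    intro Q hQ
    exact Polynomial.leadingCoeff_ne_zero.2 (hΨne Q (Multiset.mem_of_mem_filter hQ))
  have hprod_lead_ne : ((Ψp.map Polynomial.leadingCoeff)).prod ≠ 0 := by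
    apply Multiset.prod_ne_zero
    intro h0mem
    obtain ⟨Q, hQ, hQ0⟩ := Multiset.mem_map.1 h0mem
    exact hleadne Q hQ hQ0
  have hparts_le : ((Ψp.map (fun Q =>
      UniqueFactorizationMonoid.normalizedFactors Q.leadingCoeff))).sum
      ≤ (UniqueFactorizationMonoid.normalizedFactors d₁
          + m • UniqueFactorizationMonoid.normalizedFactors d₂)
        + (UniqueFactorizationMonoid.normalizedFactors e₁
          + m • UniqueFactorizationMonoid.normalizedFactors e₂) := by
    rw [← hABprod]
    have hprodnf : ((Ψp.map (fun Q =>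
        UniqueFactorizationMonoid.normalizedFactors Q.leadingCoeff))).sum
        = UniqueFactorizationMonoid.normalizedFactors
            ((Ψp.map Polynomial.leadingCoeff).prod) := by
      rw [UniqueFactorizationMonoid.normalizedFactors_multiset_prod _
        (fun h0mem => by
          obtain ⟨Q, hQ, hQ0⟩ := Multiset.mem_map.1 h0mem
          exact hleadne Q hQ hQ0), Multiset.map_map]
      rfl
    rw [hprodnf]
    exact (UniqueFactorizationMonoid.dvd_iff_normalizedFactors_le_normalizedFactors
      hprod_lead_ne hambn).1 hleads
  -- weights: no part is contained in the d-side
  have hnotle : ∀ p ∈ Ψp.map (fun Q =>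
      UniqueFactorizationMonoid.normalizedFactors Q.leadingCoeff),
      ¬ p ≤ UniqueFactorizationMonoid.normalizedFactors d₁
          + m • UniqueFactorizationMonoid.normalizedFactors d₂ := by
    intro p hp hle
    obtain ⟨Q, hQ, rfl⟩ := Multiset.mem_map.1 hp
    have hwp : ((UniqueFactorizationMonoid.normalizedFactors Q.leadingCoeff).map
        (MvPolynomial.degreeOf j)).sum = MvPolynomial.degreeOf j Q.leadingCoeff :=
      weight_normalizedFactors j (hleadne Q hQ)
    have hwA : (((UniqueFactorizationMonoid.normalizedFactors d₁
        + m • UniqueFactorizationMonoid.normalizedFactors d₂)).map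
          (MvPolynomial.degreeOf j)).sum
        = MvPolynomial.degreeOf j d₁ + m * MvPolynomial.degreeOf j d₂ := by
      rw [Multiset.map_add, Multiset.sum_add, weight_normalizedFactors j hd₁0,
        Multiset.map_nsmul, Multiset.sum_nsmul, weight_normalizedFactors j hd₂0]
      simp [nsmul_eq_mul]
    have hmono : ((UniqueFactorizationMonoid.normalizedFactors Q.leadingCoeff).map
        (MvPolynomial.degreeOf j)).sum
        ≤ (((UniqueFactorizationMonoid.normalizedFactors d₁
          + m • UniqueFactorizationMonoid.normalizedFactors d₂)).map
            (MvPolynomial.degreeOf j)).sum := by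
      obtain ⟨rest, hrest⟩ : ∃ rest, UniqueFactorizationMonoid.normalizedFactors d₁
          + m • UniqueFactorizationMonoid.normalizedFactors d₂
          = UniqueFactorizationMonoid.normalizedFactors Q.leadingCoeff + rest :=
        ⟨_, by rw [eq_comm, add_comm]; exact tsub_add_cancel_of_le hle⟩
      rw [hrest, Multiset.map_add, Multiset.sum_add]
      omega
    rw [hwp, hwA] at hmono
    exact absurd hmono (not_le.2 (hQbound Q hQ))
  -- conclude
  have hcount := multiset_counting
    (Ψp.map (fun Q => UniqueFactorizationMonoid.normalizedFactors Q.leadingCoeff))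
    _ _ hparts_le hnotle
  rw [Multiset.card_map] at hcount
  have hcardB : Multiset.card (UniqueFactorizationMonoid.normalizedFactors e₁
      + m • UniqueFactorizationMonoid.normalizedFactors e₂)
      = Omega e₁ + m * Omega e₂ := by
    rw [Multiset.card_add, Multiset.card_nsmul,
      Omega_eq_card_normalizedFactors he₁0, Omega_eq_card_normalizedFactors he₂0]
  calc Omega (P.map (algebraMap (MvPolynomial (Fin s) K)
        (FractionRing (MvPolynomial (Fin s) K)))) = Multiset.card Ψp := hOmega
    _ ≤ _ := hcount
    _ = Omega e₁ + m * Omega e₂ := hcardB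

end Stmt6Aux

theorem stmt6 {K : Type*} [Field K] (r : ℕ) (hr : 2 ≤ r)
    (m n : ℕ) (hm : 0 < m) (hn : 0 < n)
    (a b : ℕ → MvPolynomial (Fin (r - 1)) K)
    (d₁ d₂ : MvPolynomial (Fin (r - 1)) K)
    (ha0 : a 0 ≠ 0) (ham : a m ≠ 0) (hbn : b n ≠ 0)
    (hd₁ : d₁ ∣ a m) (hd₂ : d₂ ∣ b n)
    (f g : Polynomial (MvPolynomial (Fin (r - 1)) K))
    (hf : f = ∑ i ∈ Finset.range (m + 1), Polynomial.C (a i) * Polynomial.X ^ i)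
    (hg : g = ∑ j ∈ Finset.range (n + 1), Polynomial.C (b j) * Polynomial.X ^ j)
    (j : Fin (r - 1))
    (hdeg : MvPolynomial.degreeOf j (a m) >
      m * n * MvPolynomial.degreeOf j d₁ + m ^ 2 * n * MvPolynomial.degreeOf j d₂
        + Hj a m j)
    (e₁ e₂ : MvPolynomial (Fin (r - 1)) K) (he₁ : a m = d₁ * e₁) (he₂ : b n = d₂ * e₂) :
    Omega ((Polynomial.aeval g f).map
        (algebraMap (MvPolynomial (Fin (r - 1)) K)
          (FractionRing (MvPolynomial (Fin (r - 1)) K))))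
      ≤ Omega e₁ + m * Omega e₂ :=
  Stmt6Aux.aux_main j m n hm hn a b d₁ d₂ ha0 ham hbn f g hf hg hdeg e₁ e₂ he₁ he₂
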